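/- arXiv:2509.16000 — 4 statements merged into one kernel-verified Lean document; each statement's English description precedes it below -/
import Mathlib

section
/- Let [M] = [M̲, M̄] ⊆ ℝ^{n×m} be an interval matrix and p ∈ ℝ^n. Define D^c = (M̲ + M̄)/2, R = (M̄ − M̲)/2, s(i) = ‖R(i,:)‖₁, and D^s = diag(s). Then the set X = {p + Nξ : N ∈ [M̲, M̄], ξ ∈ [-1,1]^m} is contained in the zonotope ⟨p, [D^c D^s]⟩ with generator matrix the concatenation of D^c and D^s. -/
def zonotope {n ι : Type*} [Fintype ι] (p : n → ℝ) (M : Matrix n ι ℝ) :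
    Set (n → ℝ) :=
  {x | ∃ ξ : ι → ℝ, (∀ j, |ξ j| ≤ 1) ∧ x = p + M.mulVec ξ}

/-- Zonotope inclusion for an interval matrix `[M̲, M̄]`:
`{p + Nξ : M̲ ≤ N ≤ M̄, ξ ∈ [-1,1]^m} ⊆ ⟨p, [D^c D^s]⟩`. -/
theorem stmt3 {n m : ℕ} (p : Fin n → ℝ)
    (Ml Mu : Matrix (Fin n) (Fin m) ℝ) (hle : ∀ i j, Ml i j ≤ Mu i j) :
    {x | ∃ N : Matrix (Fin n) (Fin m) ℝ, (∀ i j, Ml i j ≤ N i j ∧ N i j ≤ Mu i j) ∧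
        ∃ ξ : Fin m → ℝ, (∀ j, |ξ j| ≤ 1) ∧ x = p + N.mulVec ξ}
      ⊆ zonotope p
          (Matrix.fromCols ((1 / 2 : ℝ) • (Ml + Mu))
            (Matrix.diagonal fun i => ∑ j, |((1 / 2 : ℝ) • (Mu - Ml)) i j|)) := by
  rintro x ⟨N, hN, ξ, hξ, rfl⟩
  set Dc : Matrix (Fin n) (Fin m) ℝ := (1 / 2 : ℝ) • (Ml + Mu) with hDc
  set R : Matrix (Fin n) (Fin m) ℝ := (1 / 2 : ℝ) • (Mu - Ml) with hR
  set s : Fin n → ℝ := fun i => ∑ j, |R i j| with hs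
  -- bound on the error term
  have hEbound : ∀ i, |((N - Dc).mulVec ξ) i| ≤ s i := by
    intro i
    have : ((N - Dc).mulVec ξ) i = ∑ j, (N - Dc) i j * ξ j := rfl
    rw [this]
    calc |∑ j, (N - Dc) i j * ξ j| ≤ ∑ j, |(N - Dc) i j * ξ j| :=
          Finset.abs_sum_le_sum_abs _ _
      _ ≤ ∑ j, |R i j| := by
          apply Finset.sum_le_sum
          intro j _
          rw [abs_mul]
          have h1 : |(N - Dc) i j| ≤ R i j := by
            have := (hN i j).1
            have := (hN i j).2
            simp only [Matrix.sub_apply, hDc, hR, Matrix.smul_apply, Matrix.add_apply,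
              Matrix.sub_apply, smul_eq_mul]
            rw [abs_le]
            constructor <;> linarith
          have hRnn : 0 ≤ R i j := (abs_nonneg _).trans h1
          calc |(N - Dc) i j| * |ξ j| ≤ R i j * 1 :=
                mul_le_mul h1 (hξ j) (abs_nonneg _) hRnn
            _ = |R i j| := by rw [mul_one, abs_of_nonneg hRnn]
  have hsnn : ∀ i, 0 ≤ s i := fun i => Finset.sum_nonneg fun j _ => abs_nonneg _
  refine ⟨Sum.elim ξ (fun i => if s i = 0 then 0 else ((N - Dc).mulVec ξ) i / s i), ?_, ?_⟩
  · rintro (j | i)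
    · exact hξ j
    · simp only [Sum.elim_inr]
      split_ifs with h
      · simp
      · rw [abs_div, abs_of_nonneg (hsnn i), div_le_one (lt_of_le_of_ne (hsnn i) (Ne.symm h))]
        exact hEbound i
  · rw [Matrix.fromCols_mulVec_sumElim]
    funext i
    simp only [Pi.add_apply, Matrix.mulVec_diagonal]
    have key : s i * (if s i = 0 then 0 else ((N - Dc).mulVec ξ) i / s i)
        = ((N - Dc).mulVec ξ) i := by
      split_ifs with h
      · have := hEbound i
        rw [h] at this
        have : ((N - Dc).mulVec ξ) i = 0 := abs_nonpos_iff.mp this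
        simp [h, this]
      · field_simp
    have hsub : ((N - Dc).mulVec ξ) i = N.mulVec ξ i - Dc.mulVec ξ i := by
      rw [Matrix.sub_mulVec]; rfl
    rw [key, hsub]
    ring
end

section
/- Let M ≻ 0 be a symmetric positive definite matrix and N a symmetric matrix, and Q a matrix of compatible dimensions. Then QᵀMQ − N ≺ 0 if and only if there exists a matrix U such that the block matrix [[−N, (UQ)ᵀ], [UQ, M − U − Uᵀ]] ≺ 0. -/
open Matrix

theorem aux_posDef_fromBlocks₂₂ {m n : ℕ} (A : Matrix (Fin n) (Fin n) ℝ)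
    (B : Matrix (Fin n) (Fin m) ℝ)
    {D : Matrix (Fin m) (Fin m) ℝ} (hD : D.PosDef) [Invertible D]
    (hA : (A - B * D⁻¹ * Bᴴ).PosDef) : (fromBlocks A B Bᴴ D).PosDef := by
  refine Matrix.PosDef.of_dotProduct_mulVec_pos ((Matrix.IsHermitian.fromBlocks₂₂ A B hD.1).mpr hA.1) (fun v hv => ?_)
  rw [← Sum.elim_comp_inl_inr v, dotProduct_mulVec,
    schur_complement_eq₂₂ A B _ _ hD.1]
  by_cases hx : v ∘ Sum.inl = 0
  · have hy : v ∘ Sum.inr ≠ 0 := by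
      intro hy
      apply hv
      rw [← Sum.elim_comp_inl_inr v, hx, hy]
      simp
    rw [hx]
    simp only [mulVec_zero, zero_add, star_zero, zero_vecMul, zero_dotProduct, add_zero]
    rw [← dotProduct_mulVec]
    exact hD.dotProduct_mulVec_pos hy
  · apply add_pos_of_nonneg_of_pos
    · rw [← dotProduct_mulVec]
      exact hD.posSemidef.dotProduct_mulVec_nonneg _
    · rw [← dotProduct_mulVec]
      exact hA.dotProduct_mulVec_pos hx

theorem aux_key_calc {p n : ℕ} (M U : Matrix (Fin p) (Fin p) ℝ) (N : Matrix (Fin n) (Fin n) ℝ)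
    (Q : Matrix (Fin p) (Fin n) ℝ) (x : Fin n → ℝ) :
    (Sum.elim x (Q *ᵥ x)) ⬝ᵥ
      ((-(Matrix.fromBlocks (-N) (U * Q)ᵀ (U * Q) (M - U - Uᵀ))) *ᵥ (Sum.elim x (Q *ᵥ x)))
      = x ⬝ᵥ ((N - Qᵀ * M * Q) *ᵥ x) := by
  simp only [neg_mulVec, dotProduct_neg, fromBlocks_mulVec, sub_mulVec,
    sumElim_dotProduct_sumElim, dotProduct_add, dotProduct_sub, dotProduct_neg,
    mulVec_mulVec, dotProduct_mulVec, vecMul_vecMul, vecMul_mulVec, Matrix.transpose_mul,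
    Sum.elim_comp_inl, Sum.elim_comp_inr, transpose_transpose, Matrix.mul_assoc,
    Matrix.sub_mul, Matrix.mul_sub, vecMul_sub, sub_dotProduct]
  ring

/-- Reciprocal projection lemma: for `M ≻ 0` symmetric and `N` symmetric,
`QᵀMQ - N ≺ 0` iff there exists `U` with
`[[-N, (UQ)ᵀ], [UQ, M - U - Uᵀ]] ≺ 0`. -/
theorem stmt8 {p n : ℕ} (M : Matrix (Fin p) (Fin p) ℝ) (hM : M.PosDef)
    (N : Matrix (Fin n) (Fin n) ℝ) (hN : N.IsSymm)
    (Q : Matrix (Fin p) (Fin n) ℝ) :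
    (-(Qᵀ * M * Q - N)).PosDef ↔
      ∃ U : Matrix (Fin p) (Fin p) ℝ,
        (-(Matrix.fromBlocks (-N) (U * Q)ᵀ (U * Q) (M - U - Uᵀ))).PosDef := by
  have hMt : Mᵀ = M := by simpa using hM.1.eq
  constructor
  · intro h
    refine ⟨M, ?_⟩
    haveI : Invertible M := hM.isUnit.invertible
    have hblock : -(Matrix.fromBlocks (-N) (M * Q)ᵀ (M * Q) (M - M - Mᵀ)) =
        Matrix.fromBlocks N (-(M * Q)ᵀ) (-(M * Q)ᵀ)ᴴ M := by
      have : (-(M * Q)ᵀ)ᴴ = -(M * Q) := by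
        simp [conjTranspose_neg]
      rw [this, hMt]
      ext (i | i) (j | j) <;> simp [Matrix.fromBlocks, Matrix.neg_apply]
    rw [hblock]
    apply aux_posDef_fromBlocks₂₂ _ _ hM
    have hschur : N - -(M * Q)ᵀ * M⁻¹ * (-(M * Q)ᵀ)ᴴ = -(Qᵀ * M * Q - N) := by
      have h1 : (-(M * Q)ᵀ)ᴴ = -(M * Q) := by
        simp [conjTranspose_neg]
      rw [h1, Matrix.transpose_mul, hMt]
      simp only [Matrix.neg_mul, Matrix.mul_neg, neg_neg]
      rw [Matrix.mul_assoc (Qᵀ * M) M⁻¹ (M * Q),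
        Matrix.inv_mul_cancel_left_of_invertible, neg_sub, Matrix.mul_assoc]
    rw [hschur]
    exact h
  · rintro ⟨U, hU⟩
    have hQMQ : (Qᵀ * M * Q).IsSymm := by
      rw [Matrix.IsSymm, Matrix.transpose_mul, Matrix.transpose_mul, transpose_transpose,
        hMt, Matrix.mul_assoc]
    refine Matrix.PosDef.of_dotProduct_mulVec_pos ?_ ?_
    · show (-(Qᵀ * M * Q - N))ᴴ = _
      have : (-(Qᵀ * M * Q - N))ᵀ = -(Qᵀ * M * Q - N) := by
        rw [Matrix.transpose_neg, Matrix.transpose_sub, hQMQ.eq, hN.eq]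
      simpa using this
    · intro x hx
      have hv : Sum.elim x (Q *ᵥ x) ≠ 0 := by
        intro hv
        apply hx
        funext i
        exact congrFun hv (Sum.inl i)
      have := hU.dotProduct_mulVec_pos hv
      rw [show (star (Sum.elim x (Q *ᵥ x)) : Fin n ⊕ Fin p → ℝ) = Sum.elim x (Q *ᵥ x) by
        simp, aux_key_calc M U N Q x] at this
      simpa [neg_sub] using this
end

section
/- Let Ã ∈ ℝ^{n×n}, and suppose e ∈ ⟨0, M⟩ (a centered zonotope), J is a matrix in an interval matrix [Ja̲, Jā], w ∈ ⟨0, M_w⟩, v ∈ ⟨0, M_v⟩, and D₁, L, D₂ are fixed matrices of compatible dimensions. Then Ã e + J e' + D₁ w − L D₂ v, where e' ∈ ⟨0, M⟩, lies in the zonotope ⟨0, [ÃM, D^c, D^s, D₁M_w, LD₂M_v]⟩, where D^c and D^s are the center and diagonal-radius matrices of the interval matrix product [Ja̲, Jā]·M as in the zonotope inclusion lemma. -/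
open Matrix

/-- One-step zonotopic reachability of the error dynamics:
`Ãe + Je' + D₁w - LD₂v ∈ ⟨0, [ÃM, D^c, D^s, D₁M_w, LD₂M_v]⟩`, where `D^c, D^s` come
from the zonotope-inclusion of the interval matrix product `[Ja̲, Jā]·M`. -/
theorem stmt16 {n m mw mv dw dv : ℕ}
    (Atil : Matrix (Fin n) (Fin n) ℝ) (M : Matrix (Fin n) (Fin m) ℝ)
    (Jal Jau J : Matrix (Fin n) (Fin n) ℝ)
    (hJ : ∀ i j, Jal i j ≤ J i j ∧ J i j ≤ Jau i j)
    (D₁ : Matrix (Fin n) (Fin dw) ℝ) (L : Matrix (Fin n) (Fin dv) ℝ)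
    (D₂ : Matrix (Fin dv) (Fin dv) ℝ)
    (Mw : Matrix (Fin dw) (Fin mw) ℝ) (Mv : Matrix (Fin dv) (Fin mv) ℝ)
    -- `[Nl, Nu]` is the interval matrix product `[Ja̲, Jā]·M`
    (Nl Nu : Matrix (Fin n) (Fin m) ℝ)
    (hN : ∀ K : Matrix (Fin n) (Fin n) ℝ, (∀ i j, Jal i j ≤ K i j ∧ K i j ≤ Jau i j) →
      ∀ i j, Nl i j ≤ (K * M) i j ∧ (K * M) i j ≤ Nu i j)
    (e e' : Fin n → ℝ) (w : Fin dw → ℝ) (v : Fin dv → ℝ)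
    (he : e ∈ zonotope 0 M) (he' : e' ∈ zonotope 0 M)
    (hw : w ∈ zonotope 0 Mw) (hv : v ∈ zonotope 0 Mv) :
    Atil.mulVec e + J.mulVec e' + D₁.mulVec w - (L * D₂).mulVec v ∈
      zonotope (0 : Fin n → ℝ)
        (Matrix.fromCols (Atil * M)
          (Matrix.fromCols ((1 / 2 : ℝ) • (Nl + Nu))
            (Matrix.fromCols
              (Matrix.diagonal fun i => ∑ j, ((1 / 2 : ℝ) • (Nu - Nl)) i j)
              (Matrix.fromCols (D₁ * Mw) (L * D₂ * Mv))))) := by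
  obtain ⟨ξ1, hξ1, he⟩ := he
  obtain ⟨ξ2, hξ2, he'⟩ := he'
  obtain ⟨ξw, hξw, hw⟩ := hw
  obtain ⟨ξv, hξv, hv⟩ := hv
  simp only [zero_add] at he he' hw hv
  set Dc : Matrix (Fin n) (Fin m) ℝ := (1 / 2 : ℝ) • (Nl + Nu) with hDc
  set s : Fin n → ℝ := fun i => ∑ j, ((1 / 2 : ℝ) • (Nu - Nl)) i j with hsdef
  have hJM := hN J hJ
  have hbound : ∀ i j, |(J * M) i j - Dc i j| ≤ ((1 / 2 : ℝ) • (Nu - Nl)) i j := by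
    intro i j
    obtain ⟨h1, h2⟩ := hJM i j
    simp only [hDc, Matrix.smul_apply, Matrix.add_apply, Matrix.sub_apply, smul_eq_mul]
    rw [abs_le]
    constructor <;> nlinarith
  have hs_nonneg : ∀ i, 0 ≤ s i := by
    intro i
    apply Finset.sum_nonneg
    intro j _
    have := hbound i j
    exact le_trans (abs_nonneg _) this
  have key : ∀ i, |((J * M).mulVec ξ2 - Dc.mulVec ξ2) i| ≤ s i := by
    intro i
    simp only [Pi.sub_apply, Matrix.mulVec, dotProduct]
    rw [← Finset.sum_sub_distrib]
    refine le_trans (Finset.abs_sum_le_sum_abs _ _) (Finset.sum_le_sum fun j _ => ?_)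
    rw [← sub_mul, abs_mul]
    calc |(J * M) i j - Dc i j| * |ξ2 j| ≤ ((1 / 2 : ℝ) • (Nu - Nl)) i j * 1 :=
          mul_le_mul (hbound i j) (hξ2 j) (abs_nonneg _)
            (le_trans (abs_nonneg _) (hbound i j))
      _ = _ := mul_one _
  set η : Fin n → ℝ := fun i =>
    if s i = 0 then 0 else (((J * M).mulVec ξ2 - Dc.mulVec ξ2) i) / s i with hηdef
  have hη_abs : ∀ i, |η i| ≤ 1 := by
    intro i
    simp only [hηdef]
    split_ifs with h
    · simp
    · rw [abs_div, abs_of_nonneg (hs_nonneg i),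
        div_le_one (lt_of_le_of_ne (hs_nonneg i) (Ne.symm h))]
      exact key i
  have hdiag : (Matrix.diagonal s).mulVec η = (J * M).mulVec ξ2 - Dc.mulVec ξ2 := by
    funext i
    rw [Matrix.mulVec_diagonal]
    simp only [hηdef]
    split_ifs with h
    · have := key i
      rw [h] at this
      have : ((J * M).mulVec ξ2 - Dc.mulVec ξ2) i = 0 := abs_nonpos_iff.mp this
      simp [this]
    · field_simp
  refine ⟨Sum.elim ξ1 (Sum.elim ξ2 (Sum.elim η (Sum.elim ξw (-ξv)))), ?_, ?_⟩
  · rintro (j | j | j | j | j)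
    · exact hξ1 j
    · exact hξ2 j
    · exact hη_abs j
    · exact hξw j
    · simpa using hξv j
  · rw [zero_add]
    simp only [Matrix.fromCols_mulVec_sumElim]
    rw [hdiag]
    rw [he, he', hw, hv]
    simp only [Matrix.mulVec_mulVec, Matrix.mulVec_neg]
    abel
end

section
/- Consider e_{k+1} = Ã e_k + Δf_k + D₁ w_k − L D₂ v_k where x_k ∈ X (convex), Δf_k = f(x_k) − f(x̂_k), and by the mean value theorem Δf_k = J_k e_k for some J_k in the interval matrix [J̲, J̄]. Then e_{k+1} ∈ (Ã + [J̲, J̄])·{e_k} ⊕ D₁·⟨0, M_w⟩ ⊕ (−LD₂)·⟨0, M_v⟩; in particular, if e_k ∈ ⟨0, M_{k}⟩ then e_{k+1} ∈ ⟨0, [ÃM_k, T_k, D₁M_w, LD₂M_v]⟩ where T_k = [D^c, D^s] is obtained from the zonotope inclusion of the interval matrix product [J̲,J̄]·M_k. -/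
open Matrix

/-- Propagation of the error zonotope through the error dynamics
`e_{k+1} = Ã e_k + Δf_k + D₁ w_k - L D₂ v_k` with `Δf_k = J_k e_k`, `J_k ∈ [J̲, J̄]`:
`e_{k+1}` lies in `(Ã + [J̲,J̄])·{e_k} ⊕ D₁⟨0,M_w⟩ ⊕ (-LD₂)⟨0,M_v⟩`, and if
`e_k ∈ ⟨0,M_k⟩` then `e_{k+1} ∈ ⟨0, [ÃM_k, T_k, D₁M_w, LD₂M_v]⟩` with
`T_k = [D^c D^s]` from the zonotope inclusion of `[J̲,J̄]·M_k`. -/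
theorem stmt18 {n m mw mv dw dv : ℕ}
    (Atil : Matrix (Fin n) (Fin n) ℝ) (Mk : Matrix (Fin n) (Fin m) ℝ)
    (Jl Ju Jk : Matrix (Fin n) (Fin n) ℝ)
    (hJ : ∀ i j, Jl i j ≤ Jk i j ∧ Jk i j ≤ Ju i j)
    (D₁ : Matrix (Fin n) (Fin dw) ℝ) (L : Matrix (Fin n) (Fin dv) ℝ)
    (D₂ : Matrix (Fin dv) (Fin dv) ℝ)
    (Mw : Matrix (Fin dw) (Fin mw) ℝ) (Mv : Matrix (Fin dv) (Fin mv) ℝ)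
    -- `[Nl, Nu]` is the interval matrix product `[J̲, J̄]·M_k`
    (Nl Nu : Matrix (Fin n) (Fin m) ℝ)
    (hN : ∀ K : Matrix (Fin n) (Fin n) ℝ, (∀ i j, Jl i j ≤ K i j ∧ K i j ≤ Ju i j) →
      ∀ i j, Nl i j ≤ (K * Mk) i j ∧ (K * Mk) i j ≤ Nu i j)
    (ek enext Δf : Fin n → ℝ) (w : Fin dw → ℝ) (v : Fin dv → ℝ)
    (hek : ek ∈ zonotope 0 Mk) (hw : w ∈ zonotope 0 Mw) (hv : v ∈ zonotope 0 Mv)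
    (hΔf : Δf = Jk.mulVec ek)
    (hstep : enext = Atil.mulVec ek + Δf + D₁.mulVec w - (L * D₂).mulVec v) :
    (∃ J' : Matrix (Fin n) (Fin n) ℝ, (∀ i j, Jl i j ≤ J' i j ∧ J' i j ≤ Ju i j) ∧
      ∃ w' ∈ zonotope (0 : Fin dw → ℝ) Mw, ∃ v' ∈ zonotope (0 : Fin dv → ℝ) Mv,
        enext = (Atil + J').mulVec ek + D₁.mulVec w' - (L * D₂).mulVec v') ∧
    enext ∈ zonotope (0 : Fin n → ℝ)
      (Matrix.fromCols (Atil * Mk)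
        (Matrix.fromCols ((1 / 2 : ℝ) • (Nl + Nu))
          (Matrix.fromCols
            (Matrix.diagonal fun i => ∑ j, ((1 / 2 : ℝ) • (Nu - Nl)) i j)
            (Matrix.fromCols (D₁ * Mw) (L * D₂ * Mv))))) := by
  obtain ⟨ξ, hξ, hekx⟩ := hek
  obtain ⟨ξw, hξw, hwx⟩ := hw
  obtain ⟨ξv, hξv, hvx⟩ := hv
  rw [zero_add] at hekx hwx hvx
  constructor
  · refine ⟨Jk, hJ, w, ⟨ξw, hξw, by rw [zero_add, hwx]⟩,
      v, ⟨ξv, hξv, by rw [zero_add, hvx]⟩, ?_⟩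
    rw [hstep, hΔf, Matrix.add_mulVec]
  · -- error bound part
    set d : Fin n → ℝ := fun i => ∑ j, ((1 / 2 : ℝ) • (Nu - Nl)) i j with hd
    have hNb := hN Jk hJ
    have hEbound : ∀ i, |((Jk * Mk - (1 / 2 : ℝ) • (Nl + Nu)).mulVec ξ) i| ≤ d i := by
      intro i
      have : ((Jk * Mk - (1 / 2 : ℝ) • (Nl + Nu)).mulVec ξ) i
          = ∑ j, (Jk * Mk - (1 / 2 : ℝ) • (Nl + Nu)) i j * ξ j := rfl
      rw [this, hd]
      calc |∑ j, (Jk * Mk - (1 / 2 : ℝ) • (Nl + Nu)) i j * ξ j|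
          ≤ ∑ j, |(Jk * Mk - (1 / 2 : ℝ) • (Nl + Nu)) i j * ξ j| := Finset.abs_sum_le_sum_abs _ _
        _ ≤ ∑ j, ((1 / 2 : ℝ) • (Nu - Nl)) i j := by
            apply Finset.sum_le_sum
            intro j _
            rw [abs_mul]
            have h1 : |(Jk * Mk - (1 / 2 : ℝ) • (Nl + Nu)) i j| ≤ ((1 / 2 : ℝ) • (Nu - Nl)) i j := by
              have h2 := (hNb i j).1
              have h3 := (hNb i j).2
              simp only [Matrix.sub_apply, Matrix.smul_apply, Matrix.add_apply, smul_eq_mul]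
              rw [abs_le]; constructor <;> linarith
            calc |(Jk * Mk - (1 / 2 : ℝ) • (Nl + Nu)) i j| * |ξ j|
                ≤ ((1 / 2 : ℝ) • (Nu - Nl)) i j * 1 := by
                  apply mul_le_mul h1 (hξ j) (abs_nonneg _)
                  exact le_trans (abs_nonneg _) h1
              _ = ((1 / 2 : ℝ) • (Nu - Nl)) i j := mul_one _
    set η : Fin n → ℝ := fun i =>
      if d i = 0 then 0 else ((Jk * Mk - (1 / 2 : ℝ) • (Nl + Nu)).mulVec ξ) i / d i with hη
    have hηb : ∀ i, |η i| ≤ 1 := by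
      intro i
      rw [hη]
      by_cases h : d i = 0
      · simp [h]
      · have hdpos : 0 < d i := lt_of_le_of_ne (le_trans (abs_nonneg _) (hEbound i)) (Ne.symm h)
        simp only [h, if_false, abs_div, abs_of_pos hdpos]
        rw [div_le_one hdpos]
        exact hEbound i
    have hdη : ∀ i, d i * η i = ((Jk * Mk - (1 / 2 : ℝ) • (Nl + Nu)).mulVec ξ) i := by
      intro i
      rw [hη]
      by_cases h : d i = 0
      · have h0 : ((Jk * Mk - (1 / 2 : ℝ) • (Nl + Nu)).mulVec ξ) i = 0 := by
          have := hEbound i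
          rw [h] at this
          exact abs_eq_zero.mp (le_antisymm this (abs_nonneg _))
        rw [h, zero_mul]
        exact h0.symm
      · simp only [h, if_false]
        field_simp
    refine ⟨Sum.elim ξ (Sum.elim ξ (Sum.elim η (Sum.elim ξw (-ξv)))), ?_, ?_⟩
    · rintro (j | j | j | j | j)
      · exact hξ j
      · exact hξ j
      · exact hηb j
      · exact hξw j
      · simpa using hξv j
    · rw [zero_add]
      rw [Matrix.fromCols_mulVec_sumElim, Matrix.fromCols_mulVec_sumElim,
        Matrix.fromCols_mulVec_sumElim, Matrix.fromCols_mulVec_sumElim]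
      have hdiag : (Matrix.diagonal d).mulVec η
          = (Jk * Mk - (1 / 2 : ℝ) • (Nl + Nu)).mulVec ξ := by
        funext i
        rw [Matrix.mulVec_diagonal]
        exact hdη i
      rw [hdiag]
      rw [hstep, hΔf, hekx, hwx, hvx]
      simp only [Matrix.mulVec_mulVec, Matrix.sub_mulVec, Matrix.mulVec_neg]
      abel
end
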